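/- For all real $x > 1$, $\frac{8\pi (x-1)\, \Psi(\tfrac{1}{2}x)\, \Psi(2x) + 2\,\vartheta_2(0, 2ix)^2}{\vartheta_3(\tfrac{\pi}{2}, \tfrac{i}{2}x)^2} < 1$, where $\Psi(x) = \sum_{k=1}^{\infty} k e^{-\pi x k^2}$. -/

import Mathlib

open Real Finset

namespace KeyEst

lemma one_sub_pow_le {y : ℝ} (hy0 : 0 ≤ y) (hy1 : y ≤ 1) (m : ℕ) :
    1 - y ^ m ≤ m * (1 - y) := by
  induction m with
  | zero => simp
  | succ n ih =>
    have hpow : y ^ n ≤ 1 := pow_le_one₀ hy0 hy1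
    have : 1 - y ^ (n + 1) = (1 - y) + y * (1 - y ^ n) := by ring
    rw [this]
    have h2 : y * (1 - y ^ n) ≤ 1 - y ^ n := by
      nlinarith
    push_cast
    nlinarith

lemma nat_geom_dom (j : ℕ) : (4 : ℝ) * (j + 1) ^ 2 ≤ 9 ^ (j + 1) := by
  induction j with
  | zero => norm_num
  | succ n ih =>
    have : (9:ℝ) ^ (n + 2) = 9 * 9 ^ (n + 1) := by ring
    rw [this]
    push_cast
    have h2 : (4:ℝ) * ((n:ℝ) + 1 + 1) ^ 2 ≤ 9 * (4 * ((n:ℝ) + 1) ^ 2) := by nlinarith [(Nat.cast_nonneg n : (0:ℝ) ≤ (n:ℝ))]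
    linarith

variable {r : ℝ}

lemma summable_geom_shift (h0 : 0 ≤ r) (h1 : r < 1) : Summable fun k : ℕ ↦ r ^ (k + 1) :=
  (summable_nat_add_iff 1).2 (summable_geometric_of_lt_one h0 h1)

lemma sq_ge (k : ℕ) : k + 1 ≤ (k + 1) ^ 2 := by nlinarith

lemma sq_ge' (k : ℕ) : k + 1 ≤ (2 * k + 1) ^ 2 := by nlinarith

lemma summable_A (h0 : 0 ≤ r) (h1 : r < 1) : Summable fun k : ℕ ↦ r ^ ((k + 1) ^ 2) :=
  Summable.of_nonneg_of_le (fun k ↦ pow_nonneg h0 _)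
    (fun k ↦ pow_le_pow_of_le_one h0 h1.le (sq_ge k)) (summable_geom_shift h0 h1)

lemma summable_S (h0 : 0 ≤ r) (h1 : r < 1) : Summable fun k : ℕ ↦ r ^ ((2 * k + 1) ^ 2) :=
  Summable.of_nonneg_of_le (fun k ↦ pow_nonneg h0 _)
    (fun k ↦ pow_le_pow_of_le_one h0 h1.le (sq_ge' k)) (summable_geom_shift h0 h1)

lemma summable_A' (h0 : 0 ≤ r) (h1 : r < 1) :
    Summable fun k : ℕ ↦ (-1 : ℝ) ^ (k + 1) * r ^ ((k + 1) ^ 2) := by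
  apply Summable.of_abs
  have : (fun k : ℕ ↦ |(-1 : ℝ) ^ (k + 1) * r ^ ((k + 1) ^ 2)|) =
      fun k : ℕ ↦ r ^ ((k + 1) ^ 2) := by
    funext k
    rw [abs_mul, abs_pow, abs_neg, abs_one, one_pow, one_mul, abs_of_nonneg (pow_nonneg h0 _)]
  rw [this]
  exact summable_A h0 h1

lemma summable_geom_mul_shift (h0 : 0 ≤ r) (h1 : r < 1) :
    Summable fun k : ℕ ↦ ((k : ℝ) + 1) * r ^ (k + 1) := by
  have h := summable_pow_mul_geometric_of_norm_lt_one 1 (by rwa [Real.norm_eq_abs, abs_of_nonneg h0])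
    (R := ℝ) (r := r)
  have h2 := (summable_nat_add_iff 1).2 h
  refine h2.congr fun k ↦ ?_
  push_cast
  ring

lemma summable_M (h0 : 0 ≤ r) (h1 : r < 1) :
    Summable fun k : ℕ ↦ ((k : ℝ) + 1) * r ^ ((k + 1) ^ 2) := by
  refine Summable.of_nonneg_of_le (fun k ↦ by positivity)
    (fun k ↦ ?_) (summable_geom_mul_shift h0 h1)
  exact mul_le_mul_of_nonneg_left (pow_le_pow_of_le_one h0 h1.le (sq_ge k)) (by positivity)

lemma tsum_psi_le (h0 : 0 ≤ r) (h1 : r < 1) :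
    ∑' k : ℕ, ((k : ℝ) + 1) * r ^ ((k + 1) ^ 2) ≤ r / (1 - r) ^ 2 := by
  have hn : ‖r‖ < 1 := by rwa [Real.norm_eq_abs, abs_of_nonneg h0]
  have hgeo : ∑' n : ℕ, (n : ℝ) * r ^ n = r / (1 - r) ^ 2 :=
    tsum_coe_mul_geometric_of_norm_lt_one hn
  have hsum : Summable fun n : ℕ ↦ (n : ℝ) * r ^ n := by
    have := summable_pow_mul_geometric_of_norm_lt_one 1 hn (R := ℝ)
    exact this.congr fun n ↦ by push_cast; ring
  have hshift : ∑' n : ℕ, (n : ℝ) * r ^ n = ∑' k : ℕ, ((k : ℝ) + 1) * r ^ (k + 1) := by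
    rw [Summable.tsum_eq_zero_add hsum]
    simp only [Nat.cast_zero, zero_mul, pow_zero, mul_one, zero_add]
    exact tsum_congr fun k ↦ by push_cast; ring
  calc ∑' k : ℕ, ((k : ℝ) + 1) * r ^ ((k + 1) ^ 2)
      ≤ ∑' k : ℕ, ((k : ℝ) + 1) * r ^ (k + 1) := by
        refine Summable.tsum_le_tsum (fun k ↦ ?_) (summable_M h0 h1) (summable_geom_mul_shift h0 h1)
        exact mul_le_mul_of_nonneg_left (pow_le_pow_of_le_one h0 h1.le (sq_ge k)) (by positivity)
    _ = r / (1 - r) ^ 2 := by rw [← hshift, hgeo]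

lemma tsum_A_ge (h0 : 0 ≤ r) (h1 : r < 1) :
    -(r / (1 - r)) ≤ ∑' k : ℕ, (-1 : ℝ) ^ (k + 1) * r ^ ((k + 1) ^ 2) := by
  have hshift : ∑' k : ℕ, r ^ (k + 1) = r / (1 - r) := by
    have : ∑' k : ℕ, r ^ (k + 1) = r * ∑' k : ℕ, r ^ k := by
      rw [← tsum_mul_left]
      exact tsum_congr fun k ↦ pow_succ' r k
    rw [this, tsum_geometric_of_lt_one h0 h1, div_eq_mul_inv]
  calc -(r / (1 - r)) = ∑' k : ℕ, -(r ^ (k + 1)) := by rw [tsum_neg, hshift]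
    _ ≤ ∑' k : ℕ, (-1 : ℝ) ^ (k + 1) * r ^ ((k + 1) ^ 2) := by
        refine Summable.tsum_le_tsum (fun k ↦ ?_) ((summable_geom_shift h0 h1).neg) (summable_A' h0 h1)
        have h2 : r ^ ((k + 1) ^ 2) ≤ r ^ (k + 1) :=
          pow_le_pow_of_le_one h0 h1.le (sq_ge k)
        have h3 : (0:ℝ) ≤ r ^ ((k+1)^2) := pow_nonneg h0 _
        rcases Nat.even_or_odd (k + 1) with he | ho
        · rw [he.neg_one_pow]
          nlinarith
        · rw [ho.neg_one_pow]
          nlinarith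

-- conversion lemmas

lemma exp_pow (c : ℝ) (m : ℕ) : Real.exp (-(c * m)) = (Real.exp (-c)) ^ m := by
  rw [← Real.exp_nat_mul]
  congr 1
  ring

lemma conv_psi (c : ℝ) :
    (∑' k : ℕ, ((k : ℝ) + 1) * Real.exp (-(c * ((k : ℝ) + 1) ^ 2)))
      = ∑' k : ℕ, ((k : ℝ) + 1) * (Real.exp (-c)) ^ ((k + 1) ^ 2) := by
  refine tsum_congr fun k ↦ ?_
  rw [← exp_pow]
  congr 2
  push_cast
  ring

lemma conv_T2 (c : ℝ) (hc : 0 < c) :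
    (∑' n : ℤ, Real.exp (-(c * (2 * (n : ℝ) + 1) ^ 2)))
      = 2 * ∑' k : ℕ, (Real.exp (-c)) ^ ((2 * k + 1) ^ 2) := by
  have he : 0 < Real.exp (-c) := Real.exp_pos _
  have he1 : Real.exp (-c) < 1 := Real.exp_lt_one_iff.mpr (by linarith)
  set G : ℤ → ℝ := fun n ↦ Real.exp (-(c * (2 * (n : ℝ) + 1) ^ 2)) with hG
  have hterm : ∀ k : ℕ, G (k : ℤ) = (Real.exp (-c)) ^ ((2 * k + 1) ^ 2) := by
    intro k
    simp only [hG]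
    rw [← exp_pow]
    congr 1
    push_cast
    ring
  have hterm' : ∀ k : ℕ, G (-((k : ℤ) + 1)) = (Real.exp (-c)) ^ ((2 * k + 1) ^ 2) := by
    intro k
    simp only [hG]
    rw [← exp_pow]
    congr 1
    push_cast
    ring
  have hs : Summable fun k : ℕ ↦ (Real.exp (-c)) ^ ((2 * k + 1) ^ 2) :=
    summable_S he.le he1
  rw [tsum_of_nat_of_neg_add_one (hs.congr fun k ↦ (hterm k).symm)
    (hs.congr fun k ↦ (hterm' k).symm), tsum_congr hterm, tsum_congr hterm']
  ring

lemma conv_T3 (c : ℝ) (hc : 0 < c) :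
    (∑' n : ℤ, (-1 : ℝ) ^ (n : ℤ) * Real.exp (-(c * (n : ℝ) ^ 2)))
      = 1 + 2 * ∑' k : ℕ, (-1 : ℝ) ^ (k + 1) * (Real.exp (-c)) ^ ((k + 1) ^ 2) := by
  have he : 0 < Real.exp (-c) := Real.exp_pos _
  have he1 : Real.exp (-c) < 1 := Real.exp_lt_one_iff.mpr (by linarith)
  set F : ℤ → ℝ := fun n ↦ (-1 : ℝ) ^ n * Real.exp (-(c * (n : ℝ) ^ 2)) with hF
  have hterm : ∀ k : ℕ, F ((k : ℤ) + 1)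
      = (-1 : ℝ) ^ (k + 1) * (Real.exp (-c)) ^ ((k + 1) ^ 2) := by
    intro k
    have h1 : ((k : ℤ) + 1) = (((k + 1 : ℕ) : ℤ)) := by push_cast; ring
    simp only [hF]
    rw [h1, zpow_natCast, ← exp_pow]
    congr 2
    push_cast
    ring
  have hterm' : ∀ k : ℕ, F (-((k : ℤ) + 1))
      = (-1 : ℝ) ^ (k + 1) * (Real.exp (-c)) ^ ((k + 1) ^ 2) := by
    intro k
    have h1 : (-((k : ℤ) + 1)) = -(((k + 1 : ℕ) : ℤ)) := by push_cast; ring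
    simp only [hF]
    rw [h1, zpow_neg, zpow_natCast,
      show ((-1:ℝ) ^ (k+1))⁻¹ = (-1:ℝ) ^ (k+1) by rw [← inv_pow, inv_neg, inv_one]]
    congr 1
    rw [← exp_pow]
    congr 1
    push_cast
    ring
  have hs : Summable fun k : ℕ ↦ (-1 : ℝ) ^ (k + 1) * (Real.exp (-c)) ^ ((k + 1) ^ 2) :=
    summable_A' he.le he1
  have hnat1 : Summable fun k : ℕ ↦ F ((k : ℤ) + 1) := hs.congr fun k ↦ (hterm k).symm
  have hnat : Summable fun n : ℕ ↦ F n :=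
    (summable_nat_add_iff 1).1 (hnat1.congr fun k ↦ congrArg F (by push_cast; ring))
  have hneg : Summable fun n : ℕ ↦ F (-((n : ℤ) + 1)) := hs.congr fun k ↦ (hterm' k).symm
  have h0 : F 0 = 1 := by simp [hF]
  have e1 : ∀ n : ℕ, F (((n + 1 : ℕ) : ℤ)) = (-1 : ℝ) ^ (n + 1) * (Real.exp (-c)) ^ ((n + 1) ^ 2) :=
    fun n ↦ by
      rw [show ((n + 1 : ℕ) : ℤ) = (n : ℤ) + 1 by push_cast; ring]
      exact hterm n
  rw [tsum_of_nat_of_neg_add_one hnat hneg, Summable.tsum_eq_zero_add hnat, tsum_congr e1,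
    tsum_congr hterm']
  simp only [Nat.cast_zero, h0]
  ring

-- The modular identity at x = 1 : θ₄(e^{-π/2}) relation

open Complex in
lemma modular :
    (∑' n : ℤ, (-1 : ℝ) ^ (n : ℤ) * Real.exp (-(Real.pi / 2 * (n : ℝ) ^ 2)))
      = Real.sqrt 2 * ∑' n : ℤ, Real.exp (-(Real.pi / 2 * (2 * (n : ℝ) + 1) ^ 2)) := by
  have mod1 : jacobiTheta₂ (1/2) (I/2)
      = ((∑' n : ℤ, (-1 : ℝ) ^ (n : ℤ) * Real.exp (-(Real.pi / 2 * (n : ℝ) ^ 2)) : ℝ) : ℂ) := by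
    rw [Complex.ofReal_tsum]
    unfold jacobiTheta₂ jacobiTheta₂_term
    refine tsum_congr fun n ↦ ?_
    have harg : (2 * (Real.pi : ℂ) * I * (n : ℂ) * (1/2) + (Real.pi : ℂ) * I * (n : ℂ) ^ 2 * (I/2))
        = (n : ℂ) * ((Real.pi : ℂ) * I) + ((-(Real.pi / 2 * (n : ℝ) ^ 2) : ℝ) : ℂ) := by
      push_cast
      linear_combination ((Real.pi : ℂ) * (n : ℂ) ^ 2 / 2) * Complex.I_sq
    rw [harg, Complex.exp_add, Complex.exp_int_mul, Complex.exp_pi_mul_I, ← Complex.ofReal_exp]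
    push_cast
    ring
  have mod3 : jacobiTheta₂ (-I) (2 * I)
      = ((∑' n : ℤ, Real.exp (-(2 * Real.pi * (n : ℝ) ^ 2 - 2 * Real.pi * (n : ℝ))) : ℝ) : ℂ) := by
    rw [Complex.ofReal_tsum]
    unfold jacobiTheta₂ jacobiTheta₂_term
    refine tsum_congr fun n ↦ ?_
    have harg : (2 * (Real.pi : ℂ) * I * (n : ℂ) * (-I) + (Real.pi : ℂ) * I * (n : ℂ) ^ 2 * (2 * I))
        = ((-(2 * Real.pi * (n : ℝ) ^ 2 - 2 * Real.pi * (n : ℝ)) : ℝ) : ℂ) := by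
      push_cast
      linear_combination (2 * (Real.pi : ℂ) * (n : ℂ) ^ 2 - 2 * (Real.pi : ℂ) * (n : ℂ)) *
        Complex.I_sq
    rw [harg, ← Complex.ofReal_exp]
  have feq := jacobiTheta₂_functional_equation (1/2) (I/2)
  have f1 : ((-I * (I/2) : ℂ)) ^ (1/2 : ℂ) = (((Real.sqrt 2)⁻¹ : ℝ) : ℂ) := by
    rw [show (-I * (I/2) : ℂ) = ((1/2 : ℝ) : ℂ) by
      rw [show (-I * (I/2) : ℂ) = -(I*I)/2 by ring, Complex.I_mul_I]; norm_num]
    rw [show (1/2 : ℂ) = ((1/2 : ℝ) : ℂ) by norm_num]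
    rw [← Complex.ofReal_cpow (by norm_num : (0:ℝ) ≤ 1/2)]
    norm_cast
    rw [← Real.sqrt_eq_rpow, show (1/2 : ℝ) = 2⁻¹ by norm_num, Real.sqrt_inv]
  have f2 : cexp (-(Real.pi : ℂ) * I * (1/2 : ℂ) ^ 2 / (I/2)) = ((Real.exp (-(Real.pi/2)) : ℝ) : ℂ) := by
    rw [show (-(Real.pi : ℂ) * I * (1/2 : ℂ) ^ 2 / (I/2)) = ((-(Real.pi/2) : ℝ) : ℂ) by
      have hI := Complex.I_ne_zero
      field_simp
      ring_nf
      push_cast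
      ring]
    rw [← Complex.ofReal_exp]
  have f3 : ((1/2 : ℂ)) / (I/2) = -I := by
    rw [div_eq_iff (by simp [Complex.I_ne_zero] : (I/2 : ℂ) ≠ 0)]
    linear_combination (1/2 : ℂ) * Complex.I_sq
  have f4 : (-1 : ℂ) / (I/2) = 2 * I := by
    rw [div_eq_iff (by simp [Complex.I_ne_zero] : (I/2 : ℂ) ≠ 0)]
    linear_combination -Complex.I_sq
  rw [f1, f2, f3, f4, mod1, mod3] at feq
  rw [show (1 : ℂ)/(((Real.sqrt 2)⁻¹ : ℝ) : ℂ) = ((Real.sqrt 2 : ℝ) : ℂ) by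
    rw [one_div, ← Complex.ofReal_inv, inv_inv], ← Complex.ofReal_mul, ← Complex.ofReal_mul] at feq
  have hreal : (∑' n : ℤ, (-1 : ℝ) ^ (n : ℤ) * Real.exp (-(Real.pi / 2 * (n : ℝ) ^ 2)))
      = Real.sqrt 2 * Real.exp (-(Real.pi/2)) *
        ∑' n : ℤ, Real.exp (-(2 * Real.pi * (n : ℝ) ^ 2 - 2 * Real.pi * (n : ℝ))) := by
    exact_mod_cast feq
  have hre : Real.exp (-(Real.pi/2)) *
      (∑' n : ℤ, Real.exp (-(2 * Real.pi * (n : ℝ) ^ 2 - 2 * Real.pi * (n : ℝ))))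
      = ∑' n : ℤ, Real.exp (-(Real.pi / 2 * (2 * (n : ℝ) + 1) ^ 2)) := by
    rw [← tsum_mul_left]
    rw [tsum_congr (f := fun n : ℤ ↦ Real.exp (-(Real.pi/2)) *
        Real.exp (-(2 * Real.pi * (n : ℝ) ^ 2 - 2 * Real.pi * (n : ℝ))))
      (g := fun n : ℤ ↦ Real.exp (-(Real.pi / 2 * (2 * (n : ℝ) - 1) ^ 2)))
      (fun n ↦ by
        show Real.exp (-(Real.pi/2)) * Real.exp (-(2 * Real.pi * (n : ℝ) ^ 2 - 2 * Real.pi * (n : ℝ)))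
          = Real.exp (-(Real.pi / 2 * (2 * (n : ℝ) - 1) ^ 2))
        rw [← Real.exp_add]; congr 1; ring)]
    have he := (Equiv.addRight (1 : ℤ)).tsum_eq
      (fun n : ℤ ↦ Real.exp (-(Real.pi / 2 * (2 * (n : ℝ) - 1) ^ 2)))
    simp only [Equiv.coe_addRight] at he
    rw [← he]
    exact tsum_congr fun n ↦ by congr 1; push_cast; ring
  rw [hreal, mul_assoc, hre]

lemma tsum_geom_shift {s : ℝ} (h0 : 0 ≤ s) (h1 : s < 1) : ∑' j : ℕ, s ^ (j + 1) = s / (1 - s) := by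
  have : ∑' k : ℕ, s ^ (k + 1) = s * ∑' k : ℕ, s ^ k := by
    rw [← tsum_mul_left]
    exact tsum_congr fun k ↦ pow_succ' s k
  rw [this, tsum_geometric_of_lt_one h0 h1, div_eq_mul_inv]

lemma b_le : Real.exp (-(Real.pi/2)) ≤ 0.21 := by
  have hπ : (1.57 : ℝ) ≤ Real.pi/2 := by
    have := Real.pi_gt_d6
    linarith
  have h2 : (∑ i ∈ Finset.range 6, (1.57 : ℝ) ^ i / (Nat.factorial i)) ≤ Real.exp 1.57 :=
    Real.sum_le_exp_of_nonneg (by norm_num) 6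
  have h3 : (4.77 : ℝ) ≤ ∑ i ∈ Finset.range 6, (1.57 : ℝ) ^ i / (Nat.factorial i) := by
    simp [Finset.sum_range_succ, Nat.factorial]
    norm_num
  have h1 : (4.77 : ℝ) ≤ Real.exp (Real.pi/2) :=
    le_trans (le_trans h3 h2) (Real.exp_le_exp.mpr hπ)
  have hE : (0:ℝ) < Real.exp (Real.pi/2) := Real.exp_pos _
  rw [Real.exp_neg]
  rw [inv_le_comm₀ hE (by norm_num)]
  linarith

lemma sqrt2_ge : (1.41 : ℝ) ≤ Real.sqrt 2 := by
  have : ((1.41 : ℝ)) ^ 2 ≤ 2 := by norm_num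
  nlinarith [Real.sq_sqrt (by norm_num : (0:ℝ) ≤ 2), Real.sqrt_nonneg 2]

lemma modular_nat :
    1 + 2 * ∑' k : ℕ, (-1 : ℝ) ^ (k + 1) * (Real.exp (-(Real.pi/2))) ^ ((k + 1) ^ 2)
      = Real.sqrt 2 * (2 * ∑' k : ℕ, (Real.exp (-(Real.pi/2))) ^ ((2 * k + 1) ^ 2)) := by
  have h := modular
  rw [conv_T3 (Real.pi/2) (by positivity), conv_T2 (Real.pi/2) (by positivity)] at h
  exact h

lemma psi_upper {r : ℝ} (h0 : 0 ≤ r) (h21 : r ≤ 0.21) :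
    ∑' k : ℕ, ((k : ℝ) + 1) * r ^ ((k + 1) ^ 2) ≤ 1.7 * r := by
  have h1 : r < 1 := by linarith
  refine le_trans (tsum_psi_le h0 h1) ?_
  rw [div_le_iff₀ (by nlinarith)]
  nlinarith [mul_nonneg h0 (sq_nonneg (1 - r)), mul_nonneg h0 h0,
    mul_nonneg (mul_nonneg h0 h0) h0, mul_nonneg (sub_nonneg.2 h21) h0,
    mul_nonneg (mul_nonneg (sub_nonneg.2 h21) h0) h0]

lemma T3_lower {r : ℝ} (h0 : 0 ≤ r) (h21 : r ≤ 0.21) :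
    (0.4 : ℝ) ≤ 1 + 2 * ∑' k : ℕ, (-1 : ℝ) ^ (k + 1) * r ^ ((k + 1) ^ 2) := by
  have h1 : r < 1 := by linarith
  have hA := tsum_A_ge h0 h1
  have h2 : -(0.3 : ℝ) ≤ -(r / (1 - r)) := by
    rw [neg_le_neg_iff, div_le_iff₀ (by nlinarith)]
    nlinarith
  linarith

set_option maxHeartbeats 1000000 in
lemma central (x : ℝ) (hx : 1 < x) :
    8 * Real.pi * (x - 1) * (∑' k : ℕ, ((k : ℝ) + 1) * (Real.exp (-(Real.pi/2 * x))) ^ ((k + 1) ^ 2))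
        * (∑' k : ℕ, ((k : ℝ) + 1) * ((Real.exp (-(Real.pi/2 * x))) ^ 4) ^ ((k + 1) ^ 2))
      + 2 * (2 * ∑' k : ℕ, (Real.exp (-(Real.pi/2 * x))) ^ ((2 * k + 1) ^ 2)) ^ 2
      < (1 + 2 * ∑' k : ℕ, (-1 : ℝ) ^ (k + 1) * (Real.exp (-(Real.pi/2 * x))) ^ ((k + 1) ^ 2)) ^ 2 := by
  have hπ := Real.pi_gt_d6
  have hπ' := Real.pi_lt_d2
  set q : ℝ := Real.exp (-(Real.pi/2 * x)) with hqdef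
  set b : ℝ := Real.exp (-(Real.pi/2)) with hbdef
  set u : ℝ := Real.exp (-(Real.pi/2 * (x - 1))) with hudef
  have hb0 : 0 < b := Real.exp_pos _
  have hu0 : 0 < u := Real.exp_pos _
  have hq0 : 0 < q := Real.exp_pos _
  have hb21 : b ≤ 0.21 := b_le
  have hu1 : u < 1 := by
    rw [hudef]
    apply Real.exp_lt_one_iff.mpr
    have h := mul_pos (show (0:ℝ) < Real.pi/2 by linarith only [hπ])
      (show (0:ℝ) < x - 1 by linarith only [hx])
    linarith only [h]
  have hqbu : q = b * u := by
    rw [hqdef, hbdef, hudef, ← Real.exp_add]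
    congr 1
    ring
  have hqb : q ≤ b := by
    rw [hqbu]
    nlinarith only [hb0, hu0, hu1]
  have hq21 : q ≤ 0.21 := le_trans hqb hb21
  have hq1 : q < 1 := by linarith
  have hb1 : b < 1 := by linarith
  -- notation
  set P1 : ℝ := ∑' k : ℕ, ((k : ℝ) + 1) * q ^ ((k + 1) ^ 2) with hP1def
  set P2 : ℝ := ∑' k : ℕ, ((k : ℝ) + 1) * (q ^ 4) ^ ((k + 1) ^ 2) with hP2def
  set Sq : ℝ := ∑' k : ℕ, q ^ ((2 * k + 1) ^ 2) with hSqdef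
  set Aq : ℝ := ∑' k : ℕ, (-1 : ℝ) ^ (k + 1) * q ^ ((k + 1) ^ 2) with hAqdef
  have hSbmod : (1 : ℝ) + 2 * (∑' k : ℕ, (-1 : ℝ) ^ (k + 1) * b ^ ((k + 1) ^ 2))
      = Real.sqrt 2 * (2 * ∑' k : ℕ, b ^ ((2 * k + 1) ^ 2)) := modular_nat
  set Sb : ℝ := ∑' k : ℕ, b ^ ((2 * k + 1) ^ 2) with hSbdef
  set Ab : ℝ := ∑' k : ℕ, (-1 : ℝ) ^ (k + 1) * b ^ ((k + 1) ^ 2) with hAbdef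
  -- basic bounds
  have hq40 : (0:ℝ) ≤ q ^ 4 := by positivity
  have hq4le : q ^ 4 ≤ 0.21 ^ 4 := pow_le_pow_left₀ hq0.le hq21 4
  have hq421 : q ^ 4 ≤ 0.21 := by nlinarith only [hq4le]
  have hb4le : b ^ 4 ≤ 0.21 ^ 4 := pow_le_pow_left₀ hb0.le hb21 4
  have hb3le : b ^ 3 ≤ 0.21 ^ 3 := pow_le_pow_left₀ hb0.le hb21 3
  have hP1nn : 0 ≤ P1 := tsum_nonneg fun k ↦ by positivity
  have hP2nn : 0 ≤ P2 := tsum_nonneg fun k ↦ by positivity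
  have hSqnn : 0 ≤ Sq := tsum_nonneg fun k ↦ by positivity
  have hP1le : P1 ≤ 1.7 * q := psi_upper hq0.le hq21
  have hP2le : P2 ≤ 1.7 * q ^ 4 := psi_upper hq40 hq421
  have hT3 : (0.4 : ℝ) ≤ 1 + 2 * Aq := T3_lower hq0.le hq21
  -- the difference Aq - Ab
  have hsdk : Summable fun k : ℕ ↦ b ^ ((k + 1) ^ 2) - q ^ ((k + 1) ^ 2) :=
    (summable_A hb0.le hb1).sub (summable_A hq0.le hq1)
  have hAdiff : Aq - Ab = ∑' k : ℕ, (-1 : ℝ) ^ k * (b ^ ((k + 1) ^ 2) - q ^ ((k + 1) ^ 2)) := by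
    rw [hAqdef, hAbdef, ← Summable.tsum_sub (summable_A' hq0.le hq1) (summable_A' hb0.le hb1)]
    exact tsum_congr fun k ↦ by rw [pow_succ]; ring
  -- even/odd split
  have hinje : Function.Injective (fun j : ℕ ↦ 2 * j) := fun a b h ↦ by
    simp only at h; omega
  have hinjo : Function.Injective (fun j : ℕ ↦ 2 * j + 1) := fun a b h ↦ by
    simp only at h; omega
  have hse : Summable fun j : ℕ ↦ b ^ ((2 * j + 1) ^ 2) - q ^ ((2 * j + 1) ^ 2) :=
    hsdk.comp_injective hinje
  have hso : Summable fun j : ℕ ↦ b ^ ((2 * j + 1 + 1) ^ 2) - q ^ ((2 * j + 1 + 1) ^ 2) :=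
    hsdk.comp_injective hinjo
  have hsfe : Summable fun j : ℕ ↦ (-1 : ℝ) ^ (2 * j) * (b ^ ((2 * j + 1) ^ 2) - q ^ ((2 * j + 1) ^ 2)) :=
    hse.congr fun j ↦ by simp [pow_mul]
  have hsfo : Summable fun j : ℕ ↦
      (-1 : ℝ) ^ (2 * j + 1) * (b ^ ((2 * j + 1 + 1) ^ 2) - q ^ ((2 * j + 1 + 1) ^ 2)) := by
    refine hso.neg.congr fun j ↦ ?_
    have hsign : ((-1:ℝ)) ^ (2 * j + 1) = -1 := by
      rw [pow_succ, pow_mul, neg_one_sq, one_pow, one_mul]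
    show -(b ^ ((2 * j + 1 + 1) ^ 2) - q ^ ((2 * j + 1 + 1) ^ 2))
      = (-1:ℝ) ^ (2 * j + 1) * (b ^ ((2 * j + 1 + 1) ^ 2) - q ^ ((2 * j + 1 + 1) ^ 2))
    rw [hsign]
    ring
  have heo := tsum_even_add_odd
    (f := fun k : ℕ ↦ (-1 : ℝ) ^ k * (b ^ ((k + 1) ^ 2) - q ^ ((k + 1) ^ 2))) hsfe hsfo
  have hev : ∑' j : ℕ, (-1 : ℝ) ^ (2 * j) * (b ^ ((2 * j + 1) ^ 2) - q ^ ((2 * j + 1) ^ 2))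
      = ∑' j : ℕ, (b ^ ((2 * j + 1) ^ 2) - q ^ ((2 * j + 1) ^ 2)) :=
    tsum_congr fun j ↦ by simp [pow_mul]
  have hod : ∑' j : ℕ, (-1 : ℝ) ^ (2 * j + 1) * (b ^ ((2 * j + 1 + 1) ^ 2) - q ^ ((2 * j + 1 + 1) ^ 2))
      = -∑' j : ℕ, (b ^ ((2 * j + 1 + 1) ^ 2) - q ^ ((2 * j + 1 + 1) ^ 2)) := by
    rw [← tsum_neg]
    refine tsum_congr fun j ↦ ?_
    have hsign : ((-1:ℝ)) ^ (2 * j + 1) = -1 := by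
      rw [pow_succ, pow_mul, neg_one_sq, one_pow, one_mul]
    rw [hsign]
    ring
  have hAdiff2 : Aq - Ab = (∑' j : ℕ, (b ^ ((2 * j + 1) ^ 2) - q ^ ((2 * j + 1) ^ 2)))
      - ∑' j : ℕ, (b ^ ((2 * j + 1 + 1) ^ 2) - q ^ ((2 * j + 1 + 1) ^ 2)) := by
    rw [hAdiff, ← heo, hev, hod]
    ring
  -- lower bound for the even part
  have hdk0 : ∀ j : ℕ, 0 ≤ b ^ ((2 * j + 1) ^ 2) - q ^ ((2 * j + 1) ^ 2) := fun j ↦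
    sub_nonneg.2 (pow_le_pow_left₀ hq0.le hqb _)
  have hlow_even : b - q ≤ ∑' j : ℕ, (b ^ ((2 * j + 1) ^ 2) - q ^ ((2 * j + 1) ^ 2)) := by
    have h := Summable.le_tsum hse 0 fun j _ ↦ hdk0 j
    simpa using h
  -- upper bound for the odd part
  have h9b0 : (0:ℝ) ≤ 9 * b ^ 4 := by positivity
  have h9b1 : 9 * b ^ 4 < 1 := by nlinarith only [hb4le]
  have hterm : ∀ j : ℕ, b ^ ((2 * j + 1 + 1) ^ 2) - q ^ ((2 * j + 1 + 1) ^ 2)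
      ≤ (1 - u) * (9 * b ^ 4) ^ (j + 1) := by
    intro j
    have hE4 : 4 * (j + 1) ≤ (2 * j + 1 + 1) ^ 2 := by nlinarith [sq_nonneg (j : ℤ)]
    have h1 : q ^ ((2 * j + 1 + 1) ^ 2) = b ^ ((2 * j + 1 + 1) ^ 2) * u ^ ((2 * j + 1 + 1) ^ 2) := by
      rw [hqbu, mul_pow]
    have h2 : 1 - u ^ ((2 * j + 1 + 1) ^ 2) ≤ ((2 * j + 1 + 1) ^ 2 : ℕ) * (1 - u) :=
      one_sub_pow_le hu0.le hu1.le _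
    have h3 : b ^ ((2 * j + 1 + 1) ^ 2) ≤ b ^ (4 * (j + 1)) :=
      pow_le_pow_of_le_one hb0.le hb1.le hE4
    have h4 : (((2 * j + 1 + 1) ^ 2 : ℕ) : ℝ) ≤ 9 ^ (j + 1) := by
      have := nat_geom_dom j
      push_cast
      nlinarith [this]
    have h5 : ((9 : ℝ) * b ^ 4) ^ (j + 1) = 9 ^ (j + 1) * b ^ (4 * (j + 1)) := by
      rw [mul_pow, ← pow_mul]
    have hb4nn : (0:ℝ) ≤ b ^ (4 * (j + 1)) := by positivity
    have h9nn : (0:ℝ) ≤ (9:ℝ) ^ (j + 1) := by positivity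
    have h1u' : 0 ≤ 1 - u := by linarith
    calc b ^ ((2 * j + 1 + 1) ^ 2) - q ^ ((2 * j + 1 + 1) ^ 2)
        = b ^ ((2 * j + 1 + 1) ^ 2) * (1 - u ^ ((2 * j + 1 + 1) ^ 2)) := by rw [h1]; ring
      _ ≤ b ^ (4 * (j + 1)) * (((2 * j + 1 + 1) ^ 2 : ℕ) * (1 - u)) := by
          apply mul_le_mul h3 h2
            (by nlinarith only [pow_le_one₀ hu0.le hu1.le (n := (2*j+1+1)^2)]) hb4nn
      _ ≤ b ^ (4 * (j + 1)) * ((9:ℝ) ^ (j + 1) * (1 - u)) := by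
          apply mul_le_mul_of_nonneg_left _ hb4nn
          exact mul_le_mul_of_nonneg_right h4 h1u'
      _ = (1 - u) * (9 * b ^ 4) ^ (j + 1) := by rw [h5]; ring
  have hodd_sum : ∑' j : ℕ, (b ^ ((2 * j + 1 + 1) ^ 2) - q ^ ((2 * j + 1 + 1) ^ 2))
      ≤ (1 - u) * (9 * b ^ 4 / (1 - 9 * b ^ 4)) := by
    have hmaj : Summable fun j : ℕ ↦ (1 - u) * (9 * b ^ 4) ^ (j + 1) :=
      (summable_geom_shift h9b0 h9b1).mul_left _
    calc ∑' j : ℕ, (b ^ ((2 * j + 1 + 1) ^ 2) - q ^ ((2 * j + 1 + 1) ^ 2))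
        ≤ ∑' j : ℕ, (1 - u) * (9 * b ^ 4) ^ (j + 1) := Summable.tsum_le_tsum hterm hso hmaj
      _ = (1 - u) * (9 * b ^ 4 / (1 - 9 * b ^ 4)) := by
          rw [tsum_mul_left, tsum_geom_shift h9b0 h9b1]
  have hodd_small : 9 * b ^ 4 / (1 - 9 * b ^ 4) ≤ 0.086 * b := by
    rw [div_le_iff₀ (by nlinarith only [hb4le])]
    nlinarith only [mul_le_mul_of_nonneg_right hb3le hb0.le,
      mul_le_mul_of_nonneg_right hb4le hb0.le, pow_nonneg hb0.le 4, pow_nonneg hb0.le 5, hb0]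
  have h1unn : (0:ℝ) ≤ 1 - u := by linarith
  have hwnn : (0:ℝ) ≤ b * (1 - u) := mul_nonneg hb0.le h1unn
  have hA_ge : 0.914 * (b * (1 - u)) ≤ Aq - Ab := by
    have hodd_fin : ∑' j : ℕ, (b ^ ((2 * j + 1 + 1) ^ 2) - q ^ ((2 * j + 1 + 1) ^ 2))
        ≤ 0.086 * (b * (1 - u)) := by
      have := mul_le_mul_of_nonneg_left hodd_small h1unn
      calc ∑' j : ℕ, (b ^ ((2 * j + 1 + 1) ^ 2) - q ^ ((2 * j + 1 + 1) ^ 2))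
          ≤ (1 - u) * (9 * b ^ 4 / (1 - 9 * b ^ 4)) := hodd_sum
        _ ≤ (1 - u) * (0.086 * b) := this
        _ = 0.086 * (b * (1 - u)) := by ring
    have hbq : b - q = b * (1 - u) := by rw [hqbu]; ring
    rw [hAdiff2]
    linarith only [hlow_even, hodd_fin, hbq, hwnn]
  -- Sb - Sq
  have hS_ge : b * (1 - u) ≤ Sb - Sq := by
    rw [hSbdef, hSqdef, ← Summable.tsum_sub (summable_S hb0.le hb1) (summable_S hq0.le hq1)]
    have h := Summable.le_tsum hse 0 fun j _ ↦ hdk0 j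
    have hbq : b * (1 - u) = b - q := by rw [hqbu]; ring
    rw [hbq]
    simpa using h
  -- the phi lower bound
  have hs2 : (1.41 : ℝ) ≤ Real.sqrt 2 := sqrt2_ge
  have hphi : 4.6 * (b * (1 - u)) ≤ (1 + 2 * Aq) - Real.sqrt 2 * (2 * Sq) := by
    have hkey : (1 + 2 * Aq) - Real.sqrt 2 * (2 * Sq)
        = 2 * (Aq - Ab) + Real.sqrt 2 * (2 * (Sb - Sq)) := by
      linear_combination hSbmod
    have hSnn : (0:ℝ) ≤ 2 * (Sb - Sq) := by linarith
    have h7 : 1.41 * (2 * (Sb - Sq)) ≤ Real.sqrt 2 * (2 * (Sb - Sq)) :=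
      mul_le_mul_of_nonneg_right hs2 hSnn
    rw [hkey]
    linarith only [hA_ge, hS_ge, hwnn, h7]
  have hphi0 : 0 ≤ (1 + 2 * Aq) - Real.sqrt 2 * (2 * Sq) := by linarith only [hphi, hwnn]
  -- factorization
  have hfact : (1 + 2 * Aq) ^ 2 - 2 * (2 * Sq) ^ 2
      = ((1 + 2 * Aq) - Real.sqrt 2 * (2 * Sq)) * ((1 + 2 * Aq) + Real.sqrt 2 * (2 * Sq)) := by
    have h2 : Real.sqrt 2 ^ 2 = 2 := Real.sq_sqrt (by norm_num)
    linear_combination (2 * Sq) ^ 2 * h2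
  have hDge : 1.84 * (b * (1 - u)) ≤ (1 + 2 * Aq) ^ 2 - 2 * (2 * Sq) ^ 2 := by
    rw [hfact]
    have hs2Sq : 0 ≤ Real.sqrt 2 * (2 * Sq) := by positivity
    calc (1.84 : ℝ) * (b * (1 - u)) = (4.6 * (b * (1 - u))) * 0.4 := by ring
      _ ≤ ((1 + 2 * Aq) - Real.sqrt 2 * (2 * Sq)) * (1 + 2 * Aq) :=
          mul_le_mul hphi hT3 (by norm_num) hphi0
      _ ≤ ((1 + 2 * Aq) - Real.sqrt 2 * (2 * Sq)) * ((1 + 2 * Aq) + Real.sqrt 2 * (2 * Sq)) := by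
          apply mul_le_mul_of_nonneg_left (by linarith) hphi0
  -- upper bound on the Psi product term
  have hx1 : (0:ℝ) ≤ x - 1 := by linarith
  have hq5 : q ^ 5 ≤ 0.21 ^ 4 * (b * u) := by
    have h51 : q ^ 5 = q ^ 4 * q := by ring
    rw [h51]
    calc q ^ 4 * q ≤ 0.21 ^ 4 * q := mul_le_mul_of_nonneg_right hq4le hq0.le
      _ = 0.21 ^ 4 * (b * u) := by rw [hqbu]
  have hRHS : 8 * Real.pi * (x - 1) * P1 * P2 ≤ 72.9 * ((x - 1) * (0.21 ^ 4 * (b * u))) := by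
    have hp12 : P1 * P2 ≤ 2.89 * q ^ 5 := by
      calc P1 * P2 ≤ (1.7 * q) * (1.7 * q ^ 4) :=
            mul_le_mul hP1le hP2le hP2nn (by positivity)
        _ = 2.89 * q ^ 5 := by ring
    have h8π : (0:ℝ) ≤ 8 * Real.pi * (x - 1) := by nlinarith only [hπ, hx]
    calc 8 * Real.pi * (x - 1) * P1 * P2 = (8 * Real.pi * (x - 1)) * (P1 * P2) := by ring
      _ ≤ (8 * Real.pi * (x - 1)) * (2.89 * q ^ 5) := mul_le_mul_of_nonneg_left hp12 h8π
      _ ≤ (8 * 3.15 * (x - 1)) * (2.89 * q ^ 5) := by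
          apply mul_le_mul_of_nonneg_right _ (by positivity)
          nlinarith only [hπ', hx]
      _ = 72.828 * ((x - 1) * q ^ 5) := by ring
      _ ≤ 72.9 * ((x - 1) * (0.21 ^ 4 * (b * u))) := by
          have h1 : (x - 1) * q ^ 5 ≤ (x - 1) * (0.21 ^ 4 * (b * u)) :=
            mul_le_mul_of_nonneg_left hq5 hx1
          linarith only [h1, mul_nonneg hx1 (pow_nonneg hq0.le 5)]
  -- lower bound: 1 - u ≥ (π/2)(x-1) u
  have h1u : (Real.pi/2 * (x - 1)) * u ≤ 1 - u := by
    have h := Real.add_one_le_exp (Real.pi/2 * (x - 1))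
    have he1 : Real.exp (Real.pi/2 * (x - 1)) * u = 1 := by
      rw [hudef, ← Real.exp_add]
      norm_num
    nlinarith only [h, he1, hu0]
  have hLHS_D : 2.88 * ((x - 1) * (b * u)) ≤ 1.84 * (b * (1 - u)) := by
    have hw : (0:ℝ) ≤ (x - 1) * (b * u) := by positivity
    have s1 : 2.88 * ((x - 1) * (b * u)) ≤ 1.84 * (1.5707 * ((x - 1) * (b * u))) := by
      linarith only [hw]
    have hπ2 : (1.5707 : ℝ) ≤ Real.pi/2 := by linarith only [hπ]
    have s2 : 1.5707 * ((x - 1) * (b * u)) ≤ (Real.pi/2) * ((x - 1) * (b * u)) :=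
      mul_le_mul_of_nonneg_right hπ2 hw
    have s3 : (Real.pi/2) * ((x - 1) * (b * u)) = b * ((Real.pi/2 * (x - 1)) * u) := by ring
    have s4 : b * ((Real.pi/2 * (x - 1)) * u) ≤ b * (1 - u) :=
      mul_le_mul_of_nonneg_left h1u hb0.le
    linarith only [s1, s2, s4]
  have hfin : 72.9 * ((x - 1) * (0.21 ^ 4 * (b * u))) < 2.88 * ((x - 1) * (b * u)) := by
    have hwpos : (0:ℝ) < (x - 1) * (b * u) := by
      apply mul_pos (by linarith only [hx]) (by positivity)
    nlinarith only [hwpos]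
  have hmain : 8 * Real.pi * (x - 1) * P1 * P2 < (1 + 2 * Aq) ^ 2 - 2 * (2 * Sq) ^ 2 := by
    linarith only [hRHS, hfin, hLHS_D, hDge]
  linarith only [hmain]

end KeyEst

theorem key_estimate (x : ℝ) (hx : 1 < x) :
    (8 * Real.pi * (x - 1)
        * (∑' k : ℕ, ((k : ℝ) + 1) * Real.exp (-Real.pi * (x/2) * ((k : ℝ) + 1)^2))
        * (∑' k : ℕ, ((k : ℝ) + 1) * Real.exp (-Real.pi * (2*x) * ((k : ℝ) + 1)^2))
      + 2 * (∑' n : ℤ, Real.exp (-2 * Real.pi * x * ((n : ℝ) + 1/2)^2))^2)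
      / (∑' n : ℤ, (-1 : ℝ)^(n : ℤ) * Real.exp (-Real.pi * x * (n : ℝ)^2 / 2))^2
    < 1 := by
  have hπ := Real.pi_pos
  have hx0 : (0:ℝ) < x := by linarith
  have hc : (0:ℝ) < Real.pi/2 * x := by positivity
  have e1 : (∑' k : ℕ, ((k : ℝ) + 1) * Real.exp (-Real.pi * (x/2) * ((k : ℝ) + 1)^2))
      = ∑' k : ℕ, ((k : ℝ) + 1) * (Real.exp (-(Real.pi/2 * x))) ^ ((k + 1)^2) := by
    rw [← KeyEst.conv_psi (Real.pi/2 * x)]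
    exact tsum_congr fun k ↦ by
      rw [show -Real.pi * (x/2) * ((k:ℝ)+1)^2 = -(Real.pi/2 * x * ((k:ℝ)+1)^2) by ring]
  have hbase : (Real.exp (-(Real.pi/2 * x))) ^ 4 = Real.exp (-(Real.pi * (2*x))) := by
    rw [← Real.exp_nat_mul]
    congr 1
    push_cast
    ring
  have e2 : (∑' k : ℕ, ((k : ℝ) + 1) * Real.exp (-Real.pi * (2*x) * ((k : ℝ) + 1)^2))
      = ∑' k : ℕ, ((k : ℝ) + 1) * ((Real.exp (-(Real.pi/2 * x))) ^ 4) ^ ((k + 1)^2) := by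
    rw [hbase, ← KeyEst.conv_psi (Real.pi * (2*x))]
    exact tsum_congr fun k ↦ by
      rw [show -Real.pi * (2*x) * ((k:ℝ)+1)^2 = -(Real.pi * (2*x) * ((k:ℝ)+1)^2) by ring]
  have e3 : (∑' n : ℤ, Real.exp (-2 * Real.pi * x * ((n : ℝ) + 1/2)^2))
      = 2 * ∑' k : ℕ, (Real.exp (-(Real.pi/2 * x))) ^ ((2 * k + 1)^2) := by
    rw [← KeyEst.conv_T2 (Real.pi/2 * x) hc]
    exact tsum_congr fun n ↦ by
      rw [show -2 * Real.pi * x * ((n:ℝ)+1/2)^2 = -(Real.pi/2 * x * (2*(n:ℝ)+1)^2) by ring]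
  have e4 : (∑' n : ℤ, (-1 : ℝ)^(n : ℤ) * Real.exp (-Real.pi * x * (n : ℝ)^2 / 2))
      = 1 + 2 * ∑' k : ℕ, (-1 : ℝ) ^ (k + 1) * (Real.exp (-(Real.pi/2 * x))) ^ ((k + 1)^2) := by
    rw [← KeyEst.conv_T3 (Real.pi/2 * x) hc]
    exact tsum_congr fun n ↦ by
      rw [show -Real.pi * x * (n:ℝ)^2 / 2 = -(Real.pi/2 * x * (n:ℝ)^2) by ring]
  rw [e1, e2, e3, e4]
  have h21 : Real.exp (-(Real.pi/2 * x)) ≤ 0.21 := by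
    refine le_trans (Real.exp_le_exp.mpr ?_) KeyEst.b_le
    nlinarith only [hπ, hx]
  have hT3 := KeyEst.T3_lower (Real.exp_pos (-(Real.pi/2 * x))).le h21
  have hpos : (0:ℝ) < (1 + 2 * ∑' k : ℕ, (-1 : ℝ) ^ (k + 1)
      * (Real.exp (-(Real.pi/2 * x))) ^ ((k + 1)^2))^2 :=
    pow_pos (by linarith only [hT3]) 2
  rw [div_lt_one hpos]
  exact KeyEst.central x hx
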